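/- In the knapsack setting with items indexed in nonincreasing density order, if k ≤ n is such that the prefix {0,…,k−1} has total size ∑_{i<k} w i ≥ W, then its total value satisfies ∑_{i<k} v i ≥ OPT. (A greedy prefix whose size reaches the capacity is at least as valuable as any feasible subset.) -/

import Mathlib

/-- **A greedy prefix that fills the knapsack is optimal.**
In the knapsack setting with items indexed in nonincreasing density order, if the
prefix `{0,…,k−1}` has total size at least `W`, then its total value is at least
`OPT`: it is at least the value of every feasible subset `S`. -/
theorem greedy_prefix_filling_knapsack_is_optimal
    (n : ℕ) (hn : 1 ≤ n) (v w : Fin n → ℝ) (W : ℝ) (hW : 0 < W)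
    (hv : ∀ i, 0 ≤ v i) (hw0 : ∀ i, 0 < w i) (hwW : ∀ i, w i ≤ W)
    (hdens : ∀ i j : Fin n, i ≤ j → v j / w j ≤ v i / w i)
    (k : ℕ) (hkn : k ≤ n)
    (hkfull : W ≤ ∑ i ∈ Finset.univ.filter (fun i : Fin n => (i : ℕ) < k), w i)
    (S : Finset (Fin n)) (hS : ∑ i ∈ S, w i ≤ W) :
    ∑ i ∈ S, v i ≤ ∑ i ∈ Finset.univ.filter (fun i : Fin n => (i : ℕ) < k), v i := by
  set P : Finset (Fin n) := Finset.univ.filter (fun i : Fin n => (i : ℕ) < k) with hP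
  have hk1 : 1 ≤ k := by
    by_contra h
    have hk0 : k = 0 := by omega
    have : P = ∅ := by
      ext i; simp [hP, hk0]
    rw [this] at hkfull
    simp at hkfull
    linarith
  have hjn : k - 1 < n := by omega
  set j : Fin n := ⟨k - 1, hjn⟩ with hj
  have hρ : 0 ≤ v j / w j := div_nonneg (hv j) (hw0 j).le
  -- items outside prefix have density ≤ ρ
  have hout : ∀ i ∈ S \ P, v i ≤ (v j / w j) * w i := by
    intro i hi
    have hiP : ¬ ((i : ℕ) < k) := by
      have := (Finset.mem_sdiff.mp hi).2
      simpa [hP] using this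
    have hji : j ≤ i := by
      simp only [Fin.le_def, hj]; omega
    have := hdens j i hji
    calc v i = (v i / w i) * w i := by
          rw [div_mul_cancel₀ _ (hw0 i).ne']
      _ ≤ (v j / w j) * w i := by
          apply mul_le_mul_of_nonneg_right this (hw0 i).le
  have hin : ∀ i ∈ P \ S, (v j / w j) * w i ≤ v i := by
    intro i hi
    have hiP : (i : ℕ) < k := by
      have := (Finset.mem_sdiff.mp hi).1
      simpa [hP] using this
    have hij : i ≤ j := by
      simp only [Fin.le_def, hj]; omega
    have := hdens i j hij
    calc (v j / w j) * w i ≤ (v i / w i) * w i := by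
          apply mul_le_mul_of_nonneg_right this (hw0 i).le
      _ = v i := by rw [div_mul_cancel₀ _ (hw0 i).ne']
  -- weight comparison
  have hwsum : ∑ i ∈ S \ P, w i ≤ ∑ i ∈ P \ S, w i := by
    have h1 : ∑ i ∈ S ∩ P, w i + ∑ i ∈ S \ P, w i = ∑ i ∈ S, w i :=
      Finset.sum_inter_add_sum_sdiff S P w
    have h2 : ∑ i ∈ P ∩ S, w i + ∑ i ∈ P \ S, w i = ∑ i ∈ P, w i :=
      Finset.sum_inter_add_sum_sdiff P S w
    have h3 : S ∩ P = P ∩ S := Finset.inter_comm S P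
    rw [h3] at h1
    linarith [hkfull, hS]
  have key : ∑ i ∈ S \ P, v i ≤ ∑ i ∈ P \ S, v i := by
    calc ∑ i ∈ S \ P, v i ≤ ∑ i ∈ S \ P, (v j / w j) * w i :=
          Finset.sum_le_sum hout
      _ = (v j / w j) * ∑ i ∈ S \ P, w i := by rw [Finset.mul_sum]
      _ ≤ (v j / w j) * ∑ i ∈ P \ S, w i := by
          apply mul_le_mul_of_nonneg_left hwsum hρ
      _ = ∑ i ∈ P \ S, (v j / w j) * w i := by rw [Finset.mul_sum]
      _ ≤ ∑ i ∈ P \ S, v i := Finset.sum_le_sum hin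
  have h1 : ∑ i ∈ S ∩ P, v i + ∑ i ∈ S \ P, v i = ∑ i ∈ S, v i :=
    Finset.sum_inter_add_sum_sdiff S P v
  have h2 : ∑ i ∈ P ∩ S, v i + ∑ i ∈ P \ S, v i = ∑ i ∈ P, v i :=
    Finset.sum_inter_add_sum_sdiff P S v
  have h3 : S ∩ P = P ∩ S := Finset.inter_comm S P
  rw [h3] at h1
  linarith
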